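/- Let l be a finite Borel measure on ℝ and a ≤ b real numbers. Let (g_α) be a decreasing net of functions from [a,b] to [0,∞) (i.e., g_β ≤ g_α pointwise whenever α ≤ β), each of which is nonincreasing and left-continuous on [a,b], converging pointwise to a function g, and suppose at least one g_γ is bounded. Then the net of Lebesgue integrals ∫_{[a,b]} g_α dl converges to ∫_{[a,b]} g dl. -/

import Mathlib

open MeasureTheory Set Filter Topology

/-- Let `l` be a finite Borel measure on `ℝ` and `a ≤ b`. Let `(g α)` be a
decreasing net of functions from `[a,b]` to `[0,∞)`, each nonincreasing and left-continuous
on `[a,b]`, converging pointwise on `[a,b]` to `g₀`, with at least one `g γ` bounded.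
Then `∫_{[a,b]} g α dl → ∫_{[a,b]} g₀ dl`. -/
theorem stmt0 {ι : Type*} [Preorder ι] [IsDirected ι (· ≤ ·)] [Nonempty ι]
    (l : Measure ℝ) [IsFiniteMeasure l] (a b : ℝ) (hab : a ≤ b)
    (g : ι → ℝ → ℝ) (g₀ : ℝ → ℝ)
    (hnonneg : ∀ α, ∀ t ∈ Icc a b, 0 ≤ g α t)
    (hdecr : ∀ ⦃α β : ι⦄, α ≤ β → ∀ t ∈ Icc a b, g β t ≤ g α t)
    (hanti : ∀ α, AntitoneOn (g α) (Icc a b))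
    (hlc : ∀ α, ∀ t ∈ Icc a b, ContinuousWithinAt (g α) (Iic t) t)
    (hlim : ∀ t ∈ Icc a b, Tendsto (fun α => g α t) atTop (nhds (g₀ t)))
    (hbdd : ∃ γ M, ∀ t ∈ Icc a b, g γ t ≤ M) :
    Tendsto (fun α => ∫ t in Icc a b, g α t ∂l) atTop
      (nhds (∫ t in Icc a b, g₀ t ∂l)) := by
  haveI : (atTop : Filter ι).NeBot := atTop_neBot_iff.mpr ⟨inferInstance, inferInstance⟩
  -- basic facts
  have hle : ∀ α, ∀ t ∈ Icc a b, g₀ t ≤ g α t := fun α t ht =>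
    le_of_tendsto (hlim t ht) (eventually_atTop.2 ⟨α, fun β hβ => hdecr hβ t ht⟩)
  have hg₀anti : AntitoneOn g₀ (Icc a b) := fun s hs t ht hst =>
    le_of_tendsto_of_tendsto' (hlim t ht) (hlim s hs) fun α => hanti α hs ht hst
  have hint : ∀ α, IntegrableOn (g α) (Icc a b) l := fun α =>
    AntitoneOn.integrableOn_isCompact isCompact_Icc (hanti α)
  have hg₀int : IntegrableOn g₀ (Icc a b) l :=
    AntitoneOn.integrableOn_isCompact isCompact_Icc hg₀anti
  -- a countable set including the rationals, the atoms of l, and a, b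
  have hatoms : Set.Countable {x : ℝ | 0 < l {x}} :=
    Measure.countable_meas_pos_of_disjoint_iUnion (As := fun x : ℝ => {x})
      (fun x => measurableSet_singleton x)
      (fun x y hxy => Set.disjoint_singleton.2 hxy)
  set E : Set ℝ :=
    (Icc a b ∩ Set.range ((↑) : ℚ → ℝ)) ∪ (Icc a b ∩ {x : ℝ | 0 < l {x}}) ∪ {a, b} with hEdef
  have hEcnt : E.Countable := by
    refine Set.Countable.union (Set.Countable.union ?_ ?_) ?_
    · exact (Set.countable_range _).mono inter_subset_right
    · exact hatoms.mono inter_subset_right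
    · exact (Set.countable_singleton b).insert a
  have hEsub : E ⊆ Icc a b := by
    rintro t ((⟨ht, -⟩ | ⟨ht, -⟩) | rfl | rfl)
    · exact ht
    · exact ht
    · exact ⟨le_rfl, hab⟩
    · exact ⟨hab, le_rfl⟩
  have haE : a ∈ E := Or.inr (Set.mem_insert a {b})
  obtain ⟨e, he⟩ : ∃ e : ℕ → ℝ, E = Set.range e := hEcnt.exists_eq_range ⟨a, haE⟩
  have heE : ∀ n, e n ∈ E := fun n => he ▸ Set.mem_range_self n
  -- choose indices giving values close to the limit at each point of E
  have hchoice : ∀ n k : ℕ, ∃ α : ι, g α (e n) < g₀ (e n) + 1 / (k + 1) := by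
    intro n k
    have h1 : (0:ℝ) < 1 / (k + 1) := by positivity
    exact ((hlim (e n) (hEsub (heE n))).eventually_lt_const
      (by linarith : g₀ (e n) < g₀ (e n) + 1 / (k + 1))).exists
  choose β hβ using hchoice
  set c : ℕ → ι := fun m => β m.unpair.1 m.unpair.2 with hcdef
  -- build a monotone sequence dominating c
  obtain ⟨u, hu1, hu2⟩ : ∃ u : ι → ι → ι, (∀ x y, x ≤ u x y) ∧ (∀ x y, y ≤ u x y) := by
    choose u h1 h2 using fun x y : ι => exists_ge_ge x y
    exact ⟨u, h1, h2⟩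
  set xs : ℕ → ι := fun n => Nat.rec (c 0) (fun m ih => u ih (c (m + 1))) n with hxsdef
  have hxsmono : Monotone xs := monotone_nat_of_le_succ fun m => hu1 _ _
  have hxsge : ∀ m, c m ≤ xs m := by
    intro m
    cases m with
    | zero => exact le_rfl
    | succ m => exact hu2 _ _
  -- the pointwise limit of the subsequence
  set h : ℝ → ℝ := fun t => ⨅ n, g (xs n) t with hhdef
  have hbd : ∀ t ∈ Icc a b, BddBelow (Set.range fun n => g (xs n) t) := by
    intro t ht
    refine ⟨0, ?_⟩
    rintro x ⟨n, rfl⟩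
    exact hnonneg _ t ht
  have hge : ∀ t ∈ Icc a b, g₀ t ≤ h t := fun t ht =>
    le_ciInf fun n => hle (xs n) t ht
  have hhE : ∀ t ∈ E, h t = g₀ t := by
    intro t htE
    have htI : t ∈ Icc a b := hEsub htE
    rw [he] at htE
    obtain ⟨n, rfl⟩ := htE
    refine le_antisymm ?_ (hge _ htI)
    have hseq : Tendsto (fun k : ℕ => g₀ (e n) + 1 / (k + 1)) atTop (nhds (g₀ (e n))) := by
      have := tendsto_one_div_add_atTop_nhds_zero_nat.const_add (g₀ (e n))
      simpa using this
    refine ge_of_tendsto hseq (Filter.Eventually.of_forall fun k => ?_)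
    calc h (e n) ≤ g (xs (Nat.pair n k)) (e n) := ciInf_le (hbd _ htI) _
      _ ≤ g (c (Nat.pair n k)) (e n) := hdecr (hxsge _) _ htI
      _ = g (β n k) (e n) := by rw [hcdef]; simp [Nat.unpair_pair]
      _ ≤ g₀ (e n) + 1 / (k + 1) := (hβ n k).le
  have hhanti : AntitoneOn h (Icc a b) := by
    intro s hs t ht hst
    exact le_ciInf fun n => (ciInf_le (hbd t ht) n).trans (hanti (xs n) hs ht hst)
  -- the bad set is countable and null
  set B : Set ℝ := {t | t ∈ Icc a b ∧ g₀ t < h t} with hBdef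
  have hBcnt : B.Countable := by
    have hq : ∀ t ∈ B, ∃ q : ℚ, g₀ t < q ∧ (q : ℝ) < h t := fun t ht => exists_rat_btwn ht.2
    choose! q hq1 hq2 using hq
    have key : ∀ t₁ ∈ B, ∀ t₂ ∈ B, t₁ < t₂ → (q t₂ : ℝ) < q t₁ := by
      intro t₁ h₁ t₂ h₂ h12
      obtain ⟨r, hr1, hr2⟩ := exists_rat_btwn h12
      have hrI : (r : ℝ) ∈ Icc a b := ⟨h₁.1.1.trans hr1.le, hr2.le.trans h₂.1.2⟩
      have hrE : (r : ℝ) ∈ E := Or.inl (Or.inl ⟨hrI, ⟨r, rfl⟩⟩)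
      calc (q t₂ : ℝ) < h t₂ := hq2 t₂ h₂
        _ ≤ h r := hhanti hrI h₂.1 hr2.le
        _ = g₀ r := hhE _ hrE
        _ ≤ g₀ t₁ := hg₀anti h₁.1 hrI hr1.le
        _ < q t₁ := hq1 t₁ h₁
    have hinj : Set.InjOn q B := by
      intro t₁ h₁ t₂ h₂ heq
      by_contra hne
      rcases lt_or_gt_of_ne hne with hlt | hgt
      · exact absurd heq (by exact_mod_cast (key t₁ h₁ t₂ h₂ hlt).ne')
      · exact absurd heq (by exact_mod_cast (key t₂ h₂ t₁ h₁ hgt).ne)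
    exact Set.MapsTo.countable_of_injOn (Set.mapsTo_univ q B) hinj Set.countable_univ
  have hBnull : l B = 0 := by
    rw [measure_null_iff_singleton hBcnt]
    intro x hx
    by_contra hne
    have hxE : x ∈ E := Or.inl (Or.inr ⟨hx.1, pos_iff_ne_zero.mpr hne⟩)
    exact absurd (hhE x hxE) (ne_of_gt hx.2)
  have hae : ∀ᵐ x ∂(l.restrict (Icc a b)), h x = g₀ x := by
    rw [ae_restrict_iff' measurableSet_Icc, ae_iff]
    refine measure_mono_null (fun x hx => ?_) hBnull
    simp only [Set.mem_setOf_eq, not_forall] at hx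
    push_neg at hx
    exact ⟨hx.1, lt_of_le_of_ne (hge x hx.1) (Ne.symm hx.2)⟩
  -- dominated convergence along the subsequence
  have hDCT : Tendsto (fun n => ∫ t in Icc a b, g (xs n) t ∂l) atTop
      (nhds (∫ t in Icc a b, h t ∂l)) := by
    refine tendsto_integral_of_dominated_convergence (fun t => g (xs 0) t)
      (fun n => (hint (xs n)).1) (hint (xs 0)) ?_ ?_
    · intro n
      filter_upwards [self_mem_ae_restrict measurableSet_Icc] with t ht
      rw [Real.norm_eq_abs, abs_of_nonneg (hnonneg _ t ht)]
      exact hdecr (hxsmono (Nat.zero_le n)) t ht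
    · filter_upwards [self_mem_ae_restrict measurableSet_Icc] with t ht
      exact tendsto_atTop_ciInf (fun m n hmn => hdecr (hxsmono hmn) t ht) (hbd t ht)
  have hL : Tendsto (fun n => ∫ t in Icc a b, g (xs n) t ∂l) atTop
      (nhds (∫ t in Icc a b, g₀ t ∂l)) := by
    rwa [integral_congr_ae hae] at hDCT
  -- conclude for the whole net
  rw [Metric.tendsto_nhds]
  intro ε hε
  obtain ⟨N, hN⟩ := (Metric.tendsto_nhds.mp hL ε hε).exists
  filter_upwards [Filter.eventually_ge_atTop (xs N)] with α hα
  have h1 : ∫ t in Icc a b, g₀ t ∂l ≤ ∫ t in Icc a b, g α t ∂l :=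
    setIntegral_mono_on hg₀int (hint α) measurableSet_Icc (fun t ht => hle α t ht)
  have h2 : ∫ t in Icc a b, g α t ∂l ≤ ∫ t in Icc a b, g (xs N) t ∂l :=
    setIntegral_mono_on (hint α) (hint (xs N)) measurableSet_Icc (fun t ht => hdecr hα t ht)
  have h3 : ∫ t in Icc a b, g₀ t ∂l ≤ ∫ t in Icc a b, g (xs N) t ∂l :=
    setIntegral_mono_on hg₀int (hint (xs N)) measurableSet_Icc (fun t ht => hle (xs N) t ht)
  rw [Real.dist_eq, abs_of_nonneg (sub_nonneg.2 h3)] at hN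
  rw [Real.dist_eq, abs_of_nonneg (sub_nonneg.2 h1)]
  linarith
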